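/- Let Λ, β, γ, μ > 0 be constants with R₀ = Λβ/(γ+μ) > 1. Let S, I : ℝ → ℝ be continuously differentiable on [0, ∞) with S'(t) = Λ - S(t) - β·S(t)·I(t) + γ·I(t) and I'(t) = β·S(t)·I(t) - (γ+μ)·I(t) for all t ≥ 0, S(0) ≥ 0 and I(0) > 0. Then S(t) → (γ+μ)/β and I(t) → (Λ/μ)(1 - 1/R₀) as t → ∞. -/

import Mathlib

open Filter Set

private lemma abs_mul_le_abs' {a b A B : ℝ} (ha : |a| ≤ A) (hb : |b| ≤ B) : |a * b| ≤ A * B := by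
  rw [abs_mul]
  exact mul_le_mul ha hb (abs_nonneg _) ((abs_nonneg a).trans ha)

/-- Homogeneous SIS system with mass action and linear birth-death: if
`R₀ = Λβ/(γ+μ) > 1`, the unique endemic equilibrium
`((γ+μ)/β, (Λ/μ)(1 - 1/R₀))` is globally attractive. -/
theorem stmt_8 (Λ β γ μ : ℝ) (hΛ : 0 < Λ) (hβ : 0 < β) (hγ : 0 < γ) (hμ : 0 < μ)
    (hR0 : 1 < Λ * β / (γ + μ)) (S I : ℝ → ℝ)
    (hS : ∀ t ∈ Set.Ici (0 : ℝ),
      HasDerivWithinAt S (Λ - S t - β * S t * I t + γ * I t) (Set.Ici 0) t)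
    (hI : ∀ t ∈ Set.Ici (0 : ℝ),
      HasDerivWithinAt I (β * S t * I t - (γ + μ) * I t) (Set.Ici 0) t)
    (hSc : ContinuousOn (fun t => Λ - S t - β * S t * I t + γ * I t) (Set.Ici 0))
    (hIc : ContinuousOn (fun t => β * S t * I t - (γ + μ) * I t) (Set.Ici 0))
    (hS0 : 0 ≤ S 0) (hI0 : 0 < I 0) :
    Filter.Tendsto S Filter.atTop (nhds ((γ + μ) / β)) ∧
      Filter.Tendsto I Filter.atTop
        (nhds ((Λ / μ) * (1 - 1 / (Λ * β / (γ + μ))))) := by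
  have hγμ : 0 < γ + μ := by linarith
  set Sh : ℝ := (γ + μ) / β with hSh
  have hShpos : 0 < Sh := div_pos hγμ hβ
  have hΛS : Sh < Λ := by
    rw [lt_div_iff₀ hγμ] at hR0
    rw [hSh, div_lt_iff₀ hβ]
    linarith only [hR0]
  set Ih : ℝ := (Λ - Sh) / μ with hIh
  have hIhpos : 0 < Ih := div_pos (by linarith) hμ
  clear_value Sh Ih
  have htarget : Λ / μ * (1 - 1 / (Λ * β / (γ + μ))) = Ih := by
    rw [hIh, hSh]
    field_simp
  -- continuity of S and I on [0, ∞)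
  have hScont : ContinuousOn S (Set.Ici 0) := fun t ht => (hS t ht).continuousWithinAt
  have hIcont : ContinuousOn I (Set.Ici 0) := fun t ht => (hI t ht).continuousWithinAt
  -- genuine derivatives on (0, ∞)
  have hSd : ∀ t : ℝ, 0 < t → HasDerivAt S (Λ - S t - β * S t * I t + γ * I t) t :=
    fun t ht => (hS t ht.le).hasDerivAt (Ici_mem_nhds ht)
  have hId : ∀ t : ℝ, 0 < t → HasDerivAt I (β * S t * I t - (γ + μ) * I t) t :=
    fun t ht => (hI t ht.le).hasDerivAt (Ici_mem_nhds ht)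
  -- positivity of I on [0, ∞)
  have hIpos : ∀ t ∈ Set.Ici (0 : ℝ), 0 < I t := by
    by_contra hcon
    push_neg at hcon
    obtain ⟨t0, ht0, hIt0⟩ := hcon
    have hEeq : {t | t ∈ Set.Ici (0 : ℝ) ∧ I t ≤ 0} = Set.Ici 0 ∩ I ⁻¹' Set.Iic 0 := by
      ext u; simp [Set.mem_Iic]
    have hEclosed : IsClosed {t | t ∈ Set.Ici (0 : ℝ) ∧ I t ≤ 0} := by
      rw [hEeq]
      exact hIcont.preimage_isClosed_of_isClosed isClosed_Ici isClosed_Iic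
    have hEne : {t | t ∈ Set.Ici (0 : ℝ) ∧ I t ≤ 0}.Nonempty := ⟨t0, ht0, hIt0⟩
    have hEbdd : BddBelow {t | t ∈ Set.Ici (0 : ℝ) ∧ I t ≤ 0} := ⟨0, fun u hu => hu.1⟩
    set T := sInf {t | t ∈ Set.Ici (0 : ℝ) ∧ I t ≤ 0} with hT
    have hTE : T ∈ {t | t ∈ Set.Ici (0 : ℝ) ∧ I t ≤ 0} := hEclosed.csInf_mem hEne hEbdd
    have hT0 : (0 : ℝ) ≤ T := hTE.1
    have hTpos : 0 < T := by
      rcases lt_or_eq_of_le hT0 with h | h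
      · exact h
      · exfalso; rw [← h] at hTE; have := hTE.2; linarith
    have hmid : ∀ u : ℝ, 0 ≤ u → u < T → 0 < I u := by
      intro u hu huT
      by_contra hneg
      push_neg at hneg
      exact absurd (csInf_le hEbdd ⟨hu, hneg⟩) (not_le.2 huT)
    -- bound S on [0, T]
    obtain ⟨Ks, hKs⟩ : ∃ Ks : ℝ, ∀ u ∈ Set.Icc (0 : ℝ) T, ‖S u‖ ≤ Ks :=
      (isCompact_Icc).exists_bound_of_continuousOn (hScont.mono Set.Icc_subset_Ici_self)
    set K : ℝ := γ + μ + β * Ks with hK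
    have hφmono : MonotoneOn (fun u => I u * Real.exp (K * u)) (Set.Icc 0 T) := by
      apply monotoneOn_of_deriv_nonneg (convex_Icc 0 T)
      · exact ((hIcont.mono Set.Icc_subset_Ici_self).mul
          ((Real.continuous_exp.comp (continuous_const.mul continuous_id)).continuousOn))
      · rw [interior_Icc]
        intro u hu
        have hlin : HasDerivAt (fun y : ℝ => K * y) K u := by
          simpa using (hasDerivAt_id u).const_mul K
        exact ((hId u hu.1).mul hlin.exp).differentiableAt.differentiableWithinAt
      · rw [interior_Icc]
        intro u hu
        have hlin : HasDerivAt (fun y : ℝ => K * y) K u := by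
          simpa using (hasDerivAt_id u).const_mul K
        have hd := (hId u hu.1).mul hlin.exp
        rw [HasDerivAt.deriv (f := fun u => I u * Real.exp (K * u)) hd]
        have hIu : 0 < I u := hmid u hu.1.le hu.2
        have hSu : -Ks ≤ S u := by
          have h := hKs u ⟨hu.1.le, hu.2.le⟩
          rw [Real.norm_eq_abs, abs_le] at h
          linarith [h.1]
        have heq : (β * S u * I u - (γ + μ) * I u) * Real.exp (K * u) +
            I u * (Real.exp (K * u) * K) =
            Real.exp (K * u) * (I u * (β * S u + β * Ks)) := by
          rw [hK]; ring
        rw [heq]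
        have hpos : 0 ≤ β * S u + β * Ks := by
          have := mul_le_mul_of_nonneg_left (show (0:ℝ) ≤ S u + Ks by linarith) hβ.le
          linarith only [this]
        exact mul_nonneg (Real.exp_pos _).le (mul_nonneg hIu.le hpos)
    have hmo := hφmono (Set.left_mem_Icc.2 hT0) (Set.right_mem_Icc.2 hT0) hT0
    simp only [mul_zero, Real.exp_zero, mul_one] at hmo
    have hprod : I T * Real.exp (K * T) ≤ 0 := by
      have := mul_le_mul_of_nonneg_right hTE.2 (Real.exp_pos (K * T)).le
      simpa using this
    linarith only [hmo, hprod, hI0]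
  -- the Lyapunov function
  set c : ℝ := (1 + μ) / β with hc
  have hcpos : 0 < c := div_pos (by linarith) hβ
  clear_value c
  set W : ℝ → ℝ := fun t =>
    (S t + I t - Sh - Ih) ^ 2 / 2 + c * (I t - Ih - Ih * (Real.log (I t) - Real.log Ih))
    with hW
  clear_value W
  -- lower bounds for the entropy part
  have hg0 : ∀ x : ℝ, 0 < x → 0 ≤ x - Ih - Ih * (Real.log x - Real.log Ih) := by
    intro x hx
    have h1 : Real.log x - Real.log Ih ≤ x / Ih - 1 := by
      rw [← Real.log_div hx.ne' hIhpos.ne']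
      exact Real.log_le_sub_one_of_pos (div_pos hx hIhpos)
    have h2 := mul_le_mul_of_nonneg_left h1 hIhpos.le
    have h3 : Ih * (x / Ih - 1) = x - Ih := by field_simp
    linarith only [h2, h3]
  have ghalf : ∀ x : ℝ, 0 < x →
      x / 2 - Ih * Real.log 2 ≤ x - Ih - Ih * (Real.log x - Real.log Ih) := by
    intro x hx
    have h2Ih : (0:ℝ) < 2 * Ih := by linarith
    have h0 : Real.log (x / (2 * Ih)) ≤ x / (2 * Ih) - 1 :=
      Real.log_le_sub_one_of_pos (div_pos hx h2Ih)
    have hlog : Real.log (x / (2 * Ih)) = Real.log x - Real.log 2 - Real.log Ih := by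
      rw [Real.log_div hx.ne' h2Ih.ne', Real.log_mul two_ne_zero hIhpos.ne']
      ring
    rw [hlog] at h0
    have h1 : Real.log x - Real.log Ih ≤ x / (2 * Ih) - 1 + Real.log 2 := by linarith
    have h2 := mul_le_mul_of_nonneg_left h1 hIhpos.le
    have h3 : Ih * (x / (2 * Ih) - 1 + Real.log 2) = x / 2 - Ih + Ih * Real.log 2 := by
      field_simp
    linarith only [h2, h3]
  -- derivative of W
  have hWd : ∀ t : ℝ, 0 < t →
      HasDerivAt W (-((S t - Sh) ^ 2 + μ * (I t - Ih) ^ 2)) t := by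
    intro t ht
    have hIt : 0 < I t := hIpos t ht.le
    have h1 : HasDerivAt (fun u => S u + I u - Sh - Ih)
        ((Λ - S t - β * S t * I t + γ * I t) + (β * S t * I t - (γ + μ) * I t)) t :=
      (((hSd t ht).add (hId t ht)).sub_const Sh).sub_const Ih
    have h2 := (h1.pow 2).div_const 2
    have hlog : HasDerivAt (fun u => Real.log (I u))
        ((β * S t * I t - (γ + μ) * I t) / I t) t := (hId t ht).log hIt.ne'
    have h3 : HasDerivAt (fun u => c * (I u - Ih - Ih * (Real.log (I u) - Real.log Ih)))
        (c * ((β * S t * I t - (γ + μ) * I t) -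
          Ih * ((β * S t * I t - (γ + μ) * I t) / I t))) t :=
      (((hId t ht).sub_const Ih).sub ((hlog.sub_const (Real.log Ih)).const_mul Ih)).const_mul c
    have htot := h2.add h3
    simp only [hW]
    refine htot.congr_deriv ?_
    rw [hc, hIh, hSh]
    have hβ' := hβ.ne'
    have hμ' := hμ.ne'
    have hIt' := hIt.ne'
    push_cast
    field_simp
    ring
  -- continuity and nonnegativity of W
  have hWcont : ContinuousOn W (Set.Ici 0) := by
    simp only [hW]
    apply ContinuousOn.add
    · exact ((((hScont.add hIcont).sub continuousOn_const).sub continuousOn_const).pow 2).div_const 2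
    · apply continuousOn_const.mul
      exact (hIcont.sub continuousOn_const).sub
        (continuousOn_const.mul ((hIcont.log fun t ht => (hIpos t ht).ne').sub continuousOn_const))
  have hWnn : ∀ t ∈ Set.Ici (0 : ℝ), 0 ≤ W t := by
    intro t ht
    simp only [hW]
    have h1 := hg0 (I t) (hIpos t ht)
    have h2 : (0:ℝ) ≤ (S t + I t - Sh - Ih) ^ 2 / 2 := by positivity
    exact add_nonneg h2 (mul_nonneg hcpos.le h1)
  -- W is antitone on [0, ∞)
  have hWanti : AntitoneOn W (Set.Ici 0) := by
    apply antitoneOn_of_deriv_nonpos (convex_Ici 0) hWcont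
    · rw [interior_Ici]
      exact fun t ht => (hWd t ht).differentiableAt.differentiableWithinAt
    · rw [interior_Ici]
      intro t ht
      rw [(hWd t ht).deriv]
      linarith only [sq_nonneg (S t - Sh), mul_nonneg hμ.le (sq_nonneg (I t - Ih))]
  -- W converges
  have hfanti : Antitone (fun t : ℝ => W (max t 0)) := fun a b hab =>
    hWanti (le_max_right a 0) (le_max_right b 0) (max_le_max hab le_rfl)
  have hfbdd : BddBelow (Set.range fun t : ℝ => W (max t 0)) := by
    refine ⟨0, ?_⟩
    rintro v ⟨t, rfl⟩
    exact hWnn _ (le_max_right t 0)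
  have hWtend : Filter.Tendsto W Filter.atTop (nhds (⨅ t : ℝ, W (max t 0))) := by
    refine (tendsto_atTop_ciInf hfanti hfbdd).congr' ?_
    filter_upwards [Filter.eventually_ge_atTop (0 : ℝ)] with t ht
    rw [max_eq_left ht]
  have hW0nn : 0 ≤ W 0 := hWnn 0 self_mem_Ici
  -- uniform bounds
  have hWle : ∀ t ∈ Set.Ici (0 : ℝ), W t ≤ W 0 := fun t ht => hWanti self_mem_Ici ht ht
  have hWsplit : ∀ t ∈ Set.Ici (0 : ℝ),
      (S t + I t - Sh - Ih) ^ 2 / 2 ≤ W t ∧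
      c * (I t - Ih - Ih * (Real.log (I t) - Real.log Ih)) ≤ W t := by
    intro t ht
    have h1 := hg0 (I t) (hIpos t ht)
    have h2 : (0:ℝ) ≤ (S t + I t - Sh - Ih) ^ 2 / 2 := by positivity
    constructor <;> · simp only [hW]
                      have := mul_nonneg hcpos.le h1
                      linarith only [this, h2]
  have hsqle : ∀ t ∈ Set.Ici (0 : ℝ), (S t + I t - Sh - Ih) ^ 2 ≤ 2 * W 0 := by
    intro t ht
    have h1 := (hWsplit t ht).1
    have h2 := hWle t ht
    linarith only [h1, h2]
  set Bi : ℝ := 2 * (W 0 / c + Ih * Real.log 2) with hBi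
  clear_value Bi
  have hlog2 : 0 < Real.log 2 := Real.log_pos (by norm_num)
  have hBinn : 0 ≤ Bi := by
    have h := div_nonneg hW0nn hcpos.le
    rw [hBi]
    linarith only [h, mul_pos hIhpos hlog2]
  have hIub : ∀ t ∈ Set.Ici (0 : ℝ), I t ≤ Bi := by
    intro t ht
    have h1 := hWle t ht
    have h2 := (hWsplit t ht).2
    have h3 := ghalf (I t) (hIpos t ht)
    have h4 : c * (I t / 2 - Ih * Real.log 2) ≤ W 0 := by
      have := mul_le_mul_of_nonneg_left h3 hcpos.le
      linarith only [this, h1, h2]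
    have h5 : I t / 2 - Ih * Real.log 2 ≤ W 0 / c := by
      rw [le_div_iff₀ hcpos]
      linarith only [h4]
    rw [hBi]; linarith only [h5]
  set Bs : ℝ := Real.sqrt (2 * W 0) + Sh + Ih + Bi with hBs
  clear_value Bs
  have hsqrtnn : 0 ≤ Real.sqrt (2 * W 0) := Real.sqrt_nonneg _
  have hBsnn : 0 ≤ Bs := by rw [hBs]; linarith
  have hSb : ∀ t ∈ Set.Ici (0 : ℝ), |S t| ≤ Bs := by
    intro t ht
    have h1 : |S t + I t - Sh - Ih| ≤ Real.sqrt (2 * W 0) := by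
      rw [← Real.sqrt_sq_eq_abs]
      exact Real.sqrt_le_sqrt (hsqle t ht)
    rw [abs_le] at h1 ⊢
    have h2 := hIpos t ht
    have h3 := hIub t ht
    rw [hBs]
    constructor
    · linarith [h1.1]
    · linarith [h1.2]
  have hxb : ∀ t ∈ Set.Ici (0 : ℝ), |S t - Sh| ≤ Bs + Sh := by
    intro t ht
    have h := hSb t ht
    rw [abs_le] at h ⊢
    constructor
    · linarith [h.1]
    · linarith [h.2]
  have hyb : ∀ t ∈ Set.Ici (0 : ℝ), |I t - Ih| ≤ Bi + Ih := by
    intro t ht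
    have h2 := hIpos t ht
    have h3 := hIub t ht
    rw [abs_le]
    constructor <;> linarith
  have hS'b : ∀ t ∈ Set.Ici (0 : ℝ),
      |Λ - S t - β * S t * I t + γ * I t| ≤ Λ + Bs + β * Bs * Bi + γ * Bi := by
    intro t ht
    have h1 := hSb t ht
    have h2 := hIpos t ht
    have h3 := hIub t ht
    have h4 : |S t * I t| ≤ Bs * Bi := abs_mul_le_abs' h1 (by rw [abs_of_pos h2]; exact h3)
    rw [abs_le] at h1 h4 ⊢
    have p1 := mul_le_mul_of_nonneg_left h4.2 hβ.le
    have p2 := mul_le_mul_of_nonneg_left h4.1 hβ.le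
    have q1 := mul_le_mul_of_nonneg_left h3 hγ.le
    have q2 := mul_nonneg hγ.le h2.le
    have q3 := mul_nonneg hγ.le hBinn
    constructor
    · linarith only [h1.2, p1, q2, q3, hΛ]
    · linarith only [h1.1, p2, q1]
  have hI'b : ∀ t ∈ Set.Ici (0 : ℝ),
      |β * S t * I t - (γ + μ) * I t| ≤ β * Bs * Bi + (γ + μ) * Bi := by
    intro t ht
    have h1 := hSb t ht
    have h2 := hIpos t ht
    have h3 := hIub t ht
    have h4 : |S t * I t| ≤ Bs * Bi := abs_mul_le_abs' h1 (by rw [abs_of_pos h2]; exact h3)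
    rw [abs_le] at h4 ⊢
    have p1 := mul_le_mul_of_nonneg_left h4.2 hβ.le
    have p2 := mul_le_mul_of_nonneg_left h4.1 hβ.le
    have r1 := mul_le_mul_of_nonneg_left h3 hγμ.le
    have r2 := mul_nonneg hγμ.le h2.le
    have r3 := mul_nonneg hγμ.le hBinn
    constructor
    · linarith only [p2, r1]
    · linarith only [p1, r2, r3]
  -- the quantity q and its derivative bound
  set q : ℝ → ℝ := fun t => (S t - Sh) ^ 2 + μ * (I t - Ih) ^ 2 with hq
  clear_value q
  have hqnn : ∀ t : ℝ, 0 ≤ q t := by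
    intro t
    simp only [hq]
    exact add_nonneg (sq_nonneg _) (mul_nonneg hμ.le (sq_nonneg _))
  set K : ℝ := 2 * (Bs + Sh) * (Λ + Bs + β * Bs * Bi + γ * Bi)
      + 2 * μ * (Bi + Ih) * (β * Bs * Bi + (γ + μ) * Bi) + 1 with hKdef
  clear_value K
  have hB1nn : 0 ≤ Λ + Bs + β * Bs * Bi + γ * Bi := by
    have u1 := mul_nonneg (mul_nonneg hβ.le hBsnn) hBinn
    have u2 := mul_nonneg hγ.le hBinn
    linarith only [hΛ, hBsnn, u1, u2]
  have hB2nn : 0 ≤ β * Bs * Bi + (γ + μ) * Bi := by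
    have u1 := mul_nonneg (mul_nonneg hβ.le hBsnn) hBinn
    have u2 := mul_nonneg hγμ.le hBinn
    linarith only [u1, u2]
  have hKpos : 0 < K := by
    rw [hKdef]
    have t1 : 0 ≤ 2 * (Bs + Sh) * (Λ + Bs + β * Bs * Bi + γ * Bi) :=
      mul_nonneg (by linarith) hB1nn
    have t2 : 0 ≤ 2 * μ * (Bi + Ih) * (β * Bs * Bi + (γ + μ) * Bi) :=
      mul_nonneg (mul_nonneg (by linarith) (by linarith)) hB2nn
    linarith
  have hqd : ∀ t : ℝ, 0 < t → HasDerivAt q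
      (2 * (S t - Sh) * (Λ - S t - β * S t * I t + γ * I t)
        + 2 * μ * ((I t - Ih) * (β * S t * I t - (γ + μ) * I t))) t := by
    intro t ht
    have h1 := (((hSd t ht).sub_const Sh).pow 2)
    have h2 := (((hId t ht).sub_const Ih).pow 2).const_mul μ
    have htot := h1.add h2
    simp only [hq]
    refine htot.congr_deriv ?_
    push_cast
    ring
  have hqderb : ∀ t : ℝ, 0 < t →
      |2 * (S t - Sh) * (Λ - S t - β * S t * I t + γ * I t)
        + 2 * μ * ((I t - Ih) * (β * S t * I t - (γ + μ) * I t))| ≤ K := by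
    intro t ht
    have hb1 := abs_mul_le_abs' (hxb t ht.le) (hS'b t ht.le)
    have h1 : |2 * (S t - Sh) * (Λ - S t - β * S t * I t + γ * I t)| ≤
        2 * (Bs + Sh) * (Λ + Bs + β * Bs * Bi + γ * Bi) := by
      calc |2 * (S t - Sh) * (Λ - S t - β * S t * I t + γ * I t)|
          = 2 * |(S t - Sh) * (Λ - S t - β * S t * I t + γ * I t)| := by
            rw [mul_assoc, abs_mul]; norm_num
        _ ≤ 2 * ((Bs + Sh) * (Λ + Bs + β * Bs * Bi + γ * Bi)) := by linarith only [hb1]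
        _ = 2 * (Bs + Sh) * (Λ + Bs + β * Bs * Bi + γ * Bi) := by ring
    have hb2 := abs_mul_le_abs' (hyb t ht.le) (hI'b t ht.le)
    have h2 : |2 * μ * ((I t - Ih) * (β * S t * I t - (γ + μ) * I t))| ≤
        2 * μ * ((Bi + Ih) * (β * Bs * Bi + (γ + μ) * Bi)) := by
      rw [abs_mul, abs_of_pos (show (0:ℝ) < 2 * μ by linarith)]
      exact mul_le_mul_of_nonneg_left hb2 (by linarith)
    calc |2 * (S t - Sh) * (Λ - S t - β * S t * I t + γ * I t)
        + 2 * μ * ((I t - Ih) * (β * S t * I t - (γ + μ) * I t))|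
        ≤ |2 * (S t - Sh) * (Λ - S t - β * S t * I t + γ * I t)|
          + |2 * μ * ((I t - Ih) * (β * S t * I t - (γ + μ) * I t))| := abs_add_le _ _
      _ ≤ K := by rw [hKdef]; linarith only [h1, h2]
  have hqcont : ContinuousOn q (Set.Ici 0) := by
    simp only [hq]
    exact (((hScont.sub continuousOn_const).pow 2).add
      (continuousOn_const.mul ((hIcont.sub continuousOn_const).pow 2)))
  -- reverse Lipschitz bound: q u ≥ q t - K (u - t) for 0 ≤ t ≤ u
  have hqK : MonotoneOn (fun u => q u + K * u) (Set.Ici 0) := by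
    apply monotoneOn_of_deriv_nonneg (convex_Ici 0)
    · exact hqcont.add (continuousOn_const.mul continuousOn_id)
    · rw [interior_Ici]
      intro u hu
      have hlin : HasDerivAt (fun y : ℝ => K * y) K u := by
        simpa using (hasDerivAt_id u).const_mul K
      exact ((hqd u hu).add hlin).differentiableAt.differentiableWithinAt
    · rw [interior_Ici]
      intro u hu
      have hlin : HasDerivAt (fun y : ℝ => K * y) K u := by
        simpa using (hasDerivAt_id u).const_mul K
      rw [HasDerivAt.deriv (f := fun u => q u + K * u) ((hqd u hu).add hlin)]
      have h := hqderb u hu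
      rw [abs_le] at h
      linarith only [h.1]
  -- Barbalat: q tends to 0
  have hq0 : Filter.Tendsto q Filter.atTop (nhds 0) := by
    rw [Metric.tendsto_nhds]
    intro ε hε
    by_contra hcon
    rw [Filter.not_eventually] at hcon
    set δ : ℝ := ε / (2 * K) with hδdef
    have hδ : 0 < δ := div_pos hε (by linarith)
    clear_value δ
    have hKδ : K * δ = ε / 2 := by
      have hK0 : K ≠ 0 := hKpos.ne'
      rw [hδdef]
      field_simp
    have hev : ∀ᶠ t : ℝ in Filter.atTop, W t - W (t + δ) < ε / 2 * δ := by
      have h2 : Filter.Tendsto (fun t => W t - W (t + δ)) Filter.atTop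
          (nhds ((⨅ t : ℝ, W (max t 0)) - ⨅ t : ℝ, W (max t 0))) :=
        hWtend.sub (hWtend.comp (tendsto_atTop_add_const_right _ δ tendsto_id))
      rw [sub_self] at h2
      exact h2.eventually_lt_const (mul_pos (half_pos hε) hδ)
    obtain ⟨t, hdist, ht1, hlt⟩ :=
      (hcon.and_eventually ((Filter.eventually_ge_atTop (1:ℝ)).and hev)).exists
    have ht0 : (0:ℝ) ≤ t := by linarith
    have hqt : ε ≤ q t := by
      rw [Real.dist_eq, sub_zero, not_lt, abs_of_nonneg (hqnn t)] at hdist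
      exact hdist
    have hqlow : ∀ u ∈ Set.Icc t (t + δ), ε / 2 ≤ q u := by
      intro u hu
      have h1 := hqK (show t ∈ Set.Ici (0:ℝ) from ht0)
        (show u ∈ Set.Ici (0:ℝ) from le_trans ht0 hu.1) hu.1
      have h2 : K * (u - t) ≤ K * δ := by
        apply mul_le_mul_of_nonneg_left _ hKpos.le
        linarith [hu.2]
      simp only at h1
      rw [hKδ] at h2
      linarith only [h1, h2, hqt]
    have hanti2 : AntitoneOn (fun u => W u + ε / 2 * u) (Set.Icc t (t + δ)) := by
      apply antitoneOn_of_deriv_nonpos (convex_Icc _ _)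
      · exact (hWcont.mono (fun u hu => le_trans ht0 hu.1)).add
          (continuousOn_const.mul continuousOn_id)
      · rw [interior_Icc]
        intro u hu
        have hu0 : 0 < u := lt_of_lt_of_le (lt_of_lt_of_le zero_lt_one ht1) hu.1.le
        have hlin : HasDerivAt (fun y : ℝ => ε / 2 * y) (ε / 2) u := by
          simpa using (hasDerivAt_id u).const_mul (ε / 2)
        exact ((hWd u hu0).add hlin).differentiableAt.differentiableWithinAt
      · rw [interior_Icc]
        intro u hu
        have hu0 : 0 < u := lt_of_lt_of_le (lt_of_lt_of_le zero_lt_one ht1) hu.1.le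
        have hlin : HasDerivAt (fun y : ℝ => ε / 2 * y) (ε / 2) u := by
          simpa using (hasDerivAt_id u).const_mul (ε / 2)
        rw [HasDerivAt.deriv (f := fun u => W u + ε / 2 * u) ((hWd u hu0).add hlin)]
        have hql := hqlow u ⟨hu.1.le, hu.2.le⟩
        simp only [hq] at hql
        linarith only [hql]
    have hfin := hanti2 (Set.left_mem_Icc.2 (by linarith)) (Set.right_mem_Icc.2 (by linarith))
      (by linarith)
    simp only at hfin
    linarith only [hfin, hlt]
  -- conclude convergence of S and I
  have hx2 : Filter.Tendsto (fun t => (S t - Sh) ^ 2) Filter.atTop (nhds 0) := by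
    apply squeeze_zero (fun t => sq_nonneg _) (fun t => ?_) hq0
    simp only [hq]
    linarith only [mul_nonneg hμ.le (sq_nonneg (I t - Ih))]
  have hy2 : Filter.Tendsto (fun t => (I t - Ih) ^ 2) Filter.atTop (nhds 0) := by
    have hdiv : Filter.Tendsto (fun t => q t / μ) Filter.atTop (nhds 0) := by
      have := hq0.div_const μ
      rwa [zero_div] at this
    apply squeeze_zero (fun t => sq_nonneg _) (fun t => ?_) hdiv
    rw [le_div_iff₀ hμ]
    simp only [hq]
    linarith only [sq_nonneg (S t - Sh)]
  have habs : ∀ f : ℝ → ℝ, Filter.Tendsto (fun t => f t ^ 2) Filter.atTop (nhds 0) →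
      Filter.Tendsto f Filter.atTop (nhds 0) := by
    intro f hf
    rw [tendsto_zero_iff_abs_tendsto_zero]
    have h1 : Filter.Tendsto (fun t => Real.sqrt (f t ^ 2)) Filter.atTop (nhds (Real.sqrt 0)) :=
      (Real.continuous_sqrt.tendsto 0).comp hf
    rw [Real.sqrt_zero] at h1
    refine h1.congr fun t => ?_
    simp only [Function.comp_apply]
    rw [Real.sqrt_sq_eq_abs]
  have hxt : Filter.Tendsto (fun t => S t - Sh) Filter.atTop (nhds 0) := habs _ hx2
  have hyt : Filter.Tendsto (fun t => I t - Ih) Filter.atTop (nhds 0) := habs _ hy2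
  constructor
  · have h := hxt.add_const Sh
    rw [zero_add] at h
    refine h.congr fun t => ?_
    ring
  · rw [htarget]
    have h := hyt.add_const Ih
    rw [zero_add] at h
    refine h.congr fun t => ?_
    ring
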